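/- (Lyapunov-type converse) Let α be admissible for U. If there exist a function W : [0,∞) × C_α → [0,∞) and constants p, K > 0 such that W(t₀,u) ≤ K φ_α(t₀,u)^p and W(t,u) + ∫_{t₀}^{t} φ_α(ξ,u)^p dξ = W(t₀,u) for all t ≥ t₀ ≥ 0 and u ∈ Φ(t₀)C_α, then ∫_{t₀}^∞ φ_α(ξ,u)^p dξ ≤ K φ_α(t₀,u)^p for all such u, and consequently U is nonuniform exponentially stable. -/

import Mathlib

open MeasureTheory Set

/-- φ_α(t,u) = sup_{τ ≥ t} e^{−α(τ−t)} ‖U(τ,t)u(t)‖. -/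
noncomputable def phi {X : Type*} [NormedAddCommGroup X] [NormedSpace ℝ X]
    (U : ℝ → ℝ → X →L[ℝ] X) (α t : ℝ) (u : ℝ → X) : ℝ :=
  ⨆ τ : Ici t, Real.exp (-α * ((τ : ℝ) - t)) * ‖U τ t (u t)‖

/-- (Φ(t)u)(τ) = U(τ,t)u(t) for τ ≥ t, u(τ) for τ < t. -/
noncomputable def Phim {X : Type*} [NormedAddCommGroup X] [NormedSpace ℝ X]
    (U : ℝ → ℝ → X →L[ℝ] X) (t : ℝ) (u : ℝ → X) : ℝ → X :=
  fun τ => if t ≤ τ then U τ t (u t) else u τ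

/-- u ∈ C_α : u continuous on [0,∞) and sup_{t≥0} φ_α(t,u) < ∞. -/
def MemC {X : Type*} [NormedAddCommGroup X] [NormedSpace ℝ X]
    (U : ℝ → ℝ → X →L[ℝ] X) (α : ℝ) (u : ℝ → X) : Prop :=
  ContinuousOn u (Ici 0) ∧
    ∃ C : ℝ, ∀ t, 0 ≤ t → ∀ τ, t ≤ τ →
      Real.exp (-α * (τ - t)) * ‖U τ t (u t)‖ ≤ C

/-- ‖u‖_α = sup_{t ≥ 0} φ_α(t,u). -/
noncomputable def normC {X : Type*} [NormedAddCommGroup X] [NormedSpace ℝ X]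
    (U : ℝ → ℝ → X →L[ℝ] X) (α : ℝ) (u : ℝ → X) : ℝ :=
  ⨆ t : Ici (0:ℝ), phi U α (t : ℝ) u

/-- γ is an admissible exponent for U. -/
def Admissible {X : Type*} [NormedAddCommGroup X] [NormedSpace ℝ X]
    (U : ℝ → ℝ → X →L[ℝ] X) (γ : ℝ) : Prop :=
  ∃ M : ℝ → ℝ, ContinuousOn M (Ici 0) ∧ (∀ s, 0 ≤ s → 0 < M s) ∧
    ∀ t s, 0 ≤ s → s ≤ t → ‖U t s‖ ≤ M s * Real.exp (γ * (t - s))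


section Aux

variable {X : Type*} [NormedAddCommGroup X] [NormedSpace ℝ X]

/-- Ψ t₀ ξ w = sup_{τ ≥ ξ} e^{−α(τ−ξ)} ‖U(τ,t₀)w‖ : the value of φ along the trajectory
starting at time t₀ with value w. -/
noncomputable def Psi (U : ℝ → ℝ → X →L[ℝ] X) (α t₀ ξ : ℝ) (w : X) : ℝ :=
  ⨆ τ : Ici ξ, Real.exp (-α * ((τ : ℝ) - ξ)) * ‖U τ t₀ w‖

variable {U : ℝ → ℝ → X →L[ℝ] X} {α : ℝ} {M : ℝ → ℝ}

lemma psi_nonneg (t₀ ξ : ℝ) (w : X) : 0 ≤ Psi U α t₀ ξ w :=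
  Real.iSup_nonneg fun τ => by positivity

lemma psi_term_le (hBound : ∀ t s, 0 ≤ s → s ≤ t → ‖U t s‖ ≤ M s * Real.exp (α * (t - s)))
    {t₀ ξ : ℝ} (w : X) (h0 : 0 ≤ t₀) (hξ : t₀ ≤ ξ) {τ : ℝ} (hτ : ξ ≤ τ) :
    Real.exp (-α * (τ - ξ)) * ‖U τ t₀ w‖ ≤ M t₀ * Real.exp (α * (ξ - t₀)) * ‖w‖ := by
  have h1 : ‖U τ t₀ w‖ ≤ (M t₀ * Real.exp (α * (τ - t₀))) * ‖w‖ :=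
    le_trans ((U τ t₀).le_opNorm w)
      (mul_le_mul_of_nonneg_right (hBound τ t₀ h0 (hξ.trans hτ)) (norm_nonneg w))
  have h2 : Real.exp (-α * (τ - ξ)) * (M t₀ * Real.exp (α * (τ - t₀)) * ‖w‖)
      = M t₀ * Real.exp (α * (ξ - t₀)) * ‖w‖ := by
    have : Real.exp (-α * (τ - ξ)) * Real.exp (α * (τ - t₀)) = Real.exp (α * (ξ - t₀)) := by
      rw [← Real.exp_add]; congr 1; ring
    calc Real.exp (-α * (τ - ξ)) * (M t₀ * Real.exp (α * (τ - t₀)) * ‖w‖)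
        = (Real.exp (-α * (τ - ξ)) * Real.exp (α * (τ - t₀))) * (M t₀ * ‖w‖) := by ring
      _ = Real.exp (α * (ξ - t₀)) * (M t₀ * ‖w‖) := by rw [this]
      _ = M t₀ * Real.exp (α * (ξ - t₀)) * ‖w‖ := by ring
  calc Real.exp (-α * (τ - ξ)) * ‖U τ t₀ w‖
      ≤ Real.exp (-α * (τ - ξ)) * (M t₀ * Real.exp (α * (τ - t₀)) * ‖w‖) :=
        mul_le_mul_of_nonneg_left h1 (Real.exp_nonneg _)
    _ = M t₀ * Real.exp (α * (ξ - t₀)) * ‖w‖ := h2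

lemma psi_bdd (hBound : ∀ t s, 0 ≤ s → s ≤ t → ‖U t s‖ ≤ M s * Real.exp (α * (t - s)))
    {t₀ ξ : ℝ} (w : X) (h0 : 0 ≤ t₀) (hξ : t₀ ≤ ξ) :
    BddAbove (range fun τ : Ici ξ => Real.exp (-α * ((τ : ℝ) - ξ)) * ‖U τ t₀ w‖) := by
  refine ⟨M t₀ * Real.exp (α * (ξ - t₀)) * ‖w‖, ?_⟩
  rintro x ⟨⟨τ, hτ⟩, rfl⟩
  exact psi_term_le hBound w h0 hξ hτ

lemma psi_le (hBound : ∀ t s, 0 ≤ s → s ≤ t → ‖U t s‖ ≤ M s * Real.exp (α * (t - s)))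
    {t₀ ξ : ℝ} (w : X) (h0 : 0 ≤ t₀) (hξ : t₀ ≤ ξ) :
    Psi U α t₀ ξ w ≤ M t₀ * Real.exp (α * (ξ - t₀)) * ‖w‖ := by
  haveI : Nonempty (Ici ξ) := ⟨⟨ξ, le_refl ξ⟩⟩
  exact ciSup_le fun ⟨τ, hτ⟩ => psi_term_le hBound w h0 hξ hτ

lemma le_psi (hBound : ∀ t s, 0 ≤ s → s ≤ t → ‖U t s‖ ≤ M s * Real.exp (α * (t - s)))
    {t₀ ξ : ℝ} (w : X) (h0 : 0 ≤ t₀) (hξ : t₀ ≤ ξ) {τ : ℝ} (hτ : ξ ≤ τ) :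
    Real.exp (-α * (τ - ξ)) * ‖U τ t₀ w‖ ≤ Psi U α t₀ ξ w :=
  le_ciSup (psi_bdd hBound w h0 hξ) (⟨τ, hτ⟩ : Ici ξ)

lemma psi_self_le (hBound : ∀ t s, 0 ≤ s → s ≤ t → ‖U t s‖ ≤ M s * Real.exp (α * (t - s)))
    {t₀ : ℝ} (w : X) (h0 : 0 ≤ t₀) : Psi U α t₀ t₀ w ≤ M t₀ * ‖w‖ := by
  have := psi_le hBound w h0 (le_refl t₀)
  simpa using this

lemma psi_shift (hComp : ∀ t τ s, 0 ≤ s → s ≤ τ → τ ≤ t → ∀ x : X, U t τ (U τ s x) = U t s x)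
    {t₀ t₁ ξ : ℝ} (w : X) (h0 : 0 ≤ t₀) (h1 : t₀ ≤ t₁) (hξ : t₁ ≤ ξ) :
    Psi U α t₁ ξ (U t₁ t₀ w) = Psi U α t₀ ξ w := by
  unfold Psi
  congr 1
  funext τ
  rw [hComp (↑τ) t₁ t₀ h0 h1 (hξ.trans τ.2) w]

lemma psi_grow (hBound : ∀ t s, 0 ≤ s → s ≤ t → ‖U t s‖ ≤ M s * Real.exp (α * (t - s)))
    {t₀ ξ₁ ξ₂ : ℝ} (w : X) (h0 : 0 ≤ t₀) (h1 : t₀ ≤ ξ₁) (h12 : ξ₁ ≤ ξ₂) :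
    Psi U α t₀ ξ₂ w ≤ Real.exp (α * (ξ₂ - ξ₁)) * Psi U α t₀ ξ₁ w := by
  haveI : Nonempty (Ici ξ₂) := ⟨⟨ξ₂, le_refl ξ₂⟩⟩
  refine ciSup_le ?_
  rintro ⟨τ, hτ⟩
  have key : Real.exp (-α * (τ - ξ₂)) * ‖U τ t₀ w‖
      = Real.exp (α * (ξ₂ - ξ₁)) * (Real.exp (-α * (τ - ξ₁)) * ‖U τ t₀ w‖) := by
    rw [← mul_assoc, ← Real.exp_add]; congr 2; ring
  rw [key]
  exact mul_le_mul_of_nonneg_left (le_psi hBound w h0 h1 (h12.trans hτ)) (Real.exp_nonneg _)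

/-- A measurable globally-defined function agreeing with ξ ↦ Ψ t₀ ξ w on `Ici t₀`. -/
lemma psi_measurable_rep
    (hBound : ∀ t s, 0 ≤ s → s ≤ t → ‖U t s‖ ≤ M s * Real.exp (α * (t - s)))
    {t₀ : ℝ} (w : X) (h0 : 0 ≤ t₀) :
    ∃ h : ℝ → ℝ, Measurable h ∧ ∀ ξ, t₀ ≤ ξ → h ξ = Psi U α t₀ ξ w := by
  set G : ℝ → ℝ := fun ξ => Real.exp (-α * max ξ t₀) * Psi U α t₀ (max ξ t₀) w with hG
  have hGanti : Antitone G := by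
    intro ξ₁ ξ₂ h12
    have ha : t₀ ≤ max ξ₁ t₀ := le_max_right _ _
    have hab : max ξ₁ t₀ ≤ max ξ₂ t₀ := max_le_max h12 (le_refl t₀)
    calc G ξ₂ = Real.exp (-α * max ξ₂ t₀) * Psi U α t₀ (max ξ₂ t₀) w := rfl
      _ ≤ Real.exp (-α * max ξ₂ t₀) *
          (Real.exp (α * (max ξ₂ t₀ - max ξ₁ t₀)) * Psi U α t₀ (max ξ₁ t₀) w) :=
          mul_le_mul_of_nonneg_left (psi_grow hBound w h0 ha hab) (Real.exp_nonneg _)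
      _ = G ξ₁ := by
          rw [hG, ← mul_assoc, ← Real.exp_add]
          congr 2
          ring
  refine ⟨fun ξ => Real.exp (α * ξ) * G ξ, ?_, ?_⟩
  · exact ((Real.continuous_exp.comp (continuous_const.mul continuous_id)).measurable).mul
      hGanti.measurable
  · intro ξ hξ
    have hmax : max ξ t₀ = ξ := max_eq_left hξ
    simp only [hG, hmax, ← mul_assoc, ← Real.exp_add]
    rw [show α * ξ + -α * ξ = 0 by ring, Real.exp_zero, one_mul]

end Aux

section Aux2

variable {X : Type*} [NormedAddCommGroup X] [NormedSpace ℝ X]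
variable {U : ℝ → ℝ → X →L[ℝ] X} {α : ℝ} {M : ℝ → ℝ}

lemma lemA
    (hComp : ∀ t τ s, 0 ≤ s → s ≤ τ → τ ≤ t → ∀ x : X, U t τ (U τ s x) = U t s x)
    (hBound : ∀ t s, 0 ≤ s → s ≤ t → ‖U t s‖ ≤ M s * Real.exp (α * (t - s)))
    {W : ℝ → (ℝ → X) → ℝ} (hWnn : ∀ t u, 0 ≤ W t u)
    {p K : ℝ} (hp : 0 < p) (hK : 0 < K)
    (hW1 : ∀ t₀, 0 ≤ t₀ → ∀ u : ℝ → X,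
      (∃ v : ℝ → X, MemC U α v ∧ u = Phim U t₀ v) →
      W t₀ u ≤ K * phi U α t₀ u ^ p)
    (hW2 : ∀ t₀ t, 0 ≤ t₀ → t₀ ≤ t → ∀ u : ℝ → X,
      (∃ v : ℝ → X, MemC U α v ∧ u = Phim U t₀ v) →
      W t u + (∫ ξ in t₀..t, phi U α ξ u ^ p) = W t₀ u)
    {t₀ : ℝ} (h0 : 0 ≤ t₀) {v : ℝ → X} (hv : MemC U α v) :
    (∀ ξ, t₀ ≤ ξ → phi U α ξ (Phim U t₀ v) = Psi U α t₀ ξ (v t₀)) ∧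
    IntegrableOn (fun ξ => Psi U α t₀ ξ (v t₀) ^ p) (Ioi t₀) ∧
    (∫ ξ in Ioi t₀, Psi U α t₀ ξ (v t₀) ^ p) ≤ K * Psi U α t₀ t₀ (v t₀) ^ p := by
  have hphi : ∀ ξ, t₀ ≤ ξ → phi U α ξ (Phim U t₀ v) = Psi U α t₀ ξ (v t₀) := by
    intro ξ hξ
    unfold phi Psi Phim
    congr 1
    funext τ
    rw [if_pos hξ, hComp (↑τ) ξ t₀ h0 hξ τ.2 (v t₀)]
  set f : ℝ → ℝ := fun ξ => Psi U α t₀ ξ (v t₀) ^ p with hf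
  have hfnn : ∀ ξ, 0 ≤ f ξ := fun ξ => Real.rpow_nonneg (psi_nonneg _ _ _) p
  obtain ⟨h, hmeas, hagree⟩ := psi_measurable_rep hBound (v t₀) h0
  have hioc : ∀ b : ℝ, IntegrableOn f (Ioc t₀ b) := by
    intro b
    rcases le_or_gt b t₀ with hb | hb
    · rw [Ioc_eq_empty (not_lt.mpr hb)]
      exact integrableOn_empty
    · have hmeas2 : Measurable (fun ξ => h ξ ^ p) := by fun_prop
      have hmb : IntegrableOn (fun ξ => h ξ ^ p) (Ioc t₀ b) := by
        apply Measure.integrableOn_of_bounded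
          (M := (Real.exp (|α| * (b - t₀)) * Psi U α t₀ t₀ (v t₀)) ^ p)
        · exact measure_Ioc_lt_top.ne
        · exact hmeas2.aestronglyMeasurable
        · refine (ae_restrict_iff' measurableSet_Ioc).2 (Filter.Eventually.of_forall ?_)
          intro ξ hξ
          rw [hagree ξ hξ.1.le, Real.norm_of_nonneg (Real.rpow_nonneg (psi_nonneg _ _ _) p)]
          apply Real.rpow_le_rpow (psi_nonneg _ _ _) _ hp.le
          calc Psi U α t₀ ξ (v t₀)
              ≤ Real.exp (α * (ξ - t₀)) * Psi U α t₀ t₀ (v t₀) :=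
                psi_grow hBound _ h0 le_rfl hξ.1.le
            _ ≤ Real.exp (|α| * (b - t₀)) * Psi U α t₀ t₀ (v t₀) := by
                apply mul_le_mul_of_nonneg_right _ (psi_nonneg _ _ _)
                apply Real.exp_le_exp.2
                nlinarith [le_abs_self α, abs_nonneg α, hξ.1, hξ.2,
                  mul_nonneg (sub_nonneg.2 (le_abs_self α)) (sub_nonneg.2 hξ.1.le),
                  mul_nonneg (abs_nonneg α) (sub_nonneg.2 hξ.2)]
      exact hmb.congr_fun (fun ξ hξ => by show h ξ ^ p = Psi U α t₀ ξ (v t₀) ^ p; rw [hagree ξ hξ.1.le]) measurableSet_Ioc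
  have hWb : ∀ b, t₀ ≤ b → (∫ ξ in t₀..b, f ξ) ≤ K * Psi U α t₀ t₀ (v t₀) ^ p := by
    intro b hb
    have h2 := hW2 t₀ b h0 hb (Phim U t₀ v) ⟨v, hv, rfl⟩
    have h1 := hW1 t₀ h0 (Phim U t₀ v) ⟨v, hv, rfl⟩
    have heq : (∫ ξ in t₀..b, phi U α ξ (Phim U t₀ v) ^ p) = ∫ ξ in t₀..b, f ξ := by
      apply intervalIntegral.integral_congr
      intro ξ hξ
      rw [uIcc_of_le hb] at hξ
      simp only [hf]
      rw [hphi ξ hξ.1]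
    have hphit₀ : phi U α t₀ (Phim U t₀ v) = Psi U α t₀ t₀ (v t₀) := hphi t₀ le_rfl
    rw [heq] at h2
    rw [hphit₀] at h1
    have := hWnn b (Phim U t₀ v)
    linarith
  have hIoi : IntegrableOn f (Ioi t₀) := by
    apply integrableOn_Ioi_of_intervalIntegral_norm_bounded
      (K * Psi U α t₀ t₀ (v t₀) ^ p) t₀ (fun i : ℝ => hioc i) Filter.tendsto_id
    filter_upwards [Filter.eventually_ge_atTop t₀] with b hb
    have hmm : (∫ ξ in t₀..b, ‖f ξ‖) = ∫ ξ in t₀..b, f ξ := by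
      apply intervalIntegral.integral_congr
      intro ξ _
      exact Real.norm_of_nonneg (hfnn ξ)
    rw [hmm]
    exact hWb b hb
  have htend := intervalIntegral_tendsto_integral_Ioi t₀ hIoi Filter.tendsto_id
  refine ⟨hphi, hIoi, le_of_tendsto htend ?_⟩
  filter_upwards [Filter.eventually_ge_atTop t₀] with b hb using hWb b hb

end Aux2

section Aux3

variable {X : Type*} [NormedAddCommGroup X] [NormedSpace ℝ X]

/-- A test function in C_α taking the value `w` at time `t₁ ≥ 0`. -/
noncomputable def cv (M : ℝ → ℝ) (t₁ : ℝ) (w : X) : ℝ → X :=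
  fun s => ((1 + |M (max s 0)|)⁻¹ * (1 + |M t₁|)) • w

variable {U : ℝ → ℝ → X →L[ℝ] X} {α : ℝ} {M : ℝ → ℝ}

lemma cv_at (t₁ : ℝ) (h1 : 0 ≤ t₁) (w : X) : cv M t₁ w t₁ = w := by
  unfold cv
  rw [max_eq_left h1, inv_mul_cancel₀ (by positivity), one_smul]

lemma cv_mem (hM : ContinuousOn M (Ici 0))
    (hBound : ∀ t s, 0 ≤ s → s ≤ t → ‖U t s‖ ≤ M s * Real.exp (α * (t - s)))
    (t₁ : ℝ) (w : X) : MemC U α (cv M t₁ w) := by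
  constructor
  · have hmax : ContinuousOn (fun s : ℝ => M (max s 0)) (Ici 0) :=
      hM.comp ((continuous_id.max continuous_const).continuousOn)
        (fun s _ => le_max_right s 0)
    have hne : ∀ s : ℝ, s ∈ Ici (0:ℝ) → (1 + |M (max s 0)|) ≠ 0 := fun s _ => by positivity
    exact (((continuousOn_const.add hmax.abs).inv₀ hne).mul continuousOn_const).smul
      continuousOn_const
  · refine ⟨(1 + |M t₁|) * ‖w‖, ?_⟩
    intro t ht τ hτ
    have hmaxt : max t 0 = t := max_eq_left ht
    have hcpos : (0:ℝ) < (1 + |M t|)⁻¹ := by positivity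
    have hnorm : ‖cv M t₁ w t‖ = ((1 + |M t|)⁻¹ * (1 + |M t₁|)) * ‖w‖ := by
      unfold cv
      rw [hmaxt, norm_smul, Real.norm_eq_abs, abs_of_pos (by positivity)]
    have hop : ‖U τ t (cv M t₁ w t)‖
        ≤ (M t * Real.exp (α * (τ - t))) * (((1 + |M t|)⁻¹ * (1 + |M t₁|)) * ‖w‖) := by
      rw [← hnorm]
      exact le_trans ((U τ t).le_opNorm _)
        (mul_le_mul_of_nonneg_right (hBound τ t ht hτ) (norm_nonneg _))
    have hexp : Real.exp (-α * (τ - t)) * Real.exp (α * (τ - t)) = 1 := by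
      rw [← Real.exp_add, show -α * (τ - t) + α * (τ - t) = 0 by ring, Real.exp_zero]
    have hMc : M t * (1 + |M t|)⁻¹ ≤ 1 := by
      have h1 : M t ≤ 1 + |M t| := by
        have := le_abs_self (M t); linarith
      calc M t * (1 + |M t|)⁻¹ ≤ (1 + |M t|) * (1 + |M t|)⁻¹ :=
            mul_le_mul_of_nonneg_right h1 hcpos.le
        _ = 1 := mul_inv_cancel₀ (by positivity)
    calc Real.exp (-α * (τ - t)) * ‖U τ t (cv M t₁ w t)‖
        ≤ Real.exp (-α * (τ - t)) *
          ((M t * Real.exp (α * (τ - t))) * (((1 + |M t|)⁻¹ * (1 + |M t₁|)) * ‖w‖)) :=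
          mul_le_mul_of_nonneg_left hop (Real.exp_nonneg _)
      _ = (Real.exp (-α * (τ - t)) * Real.exp (α * (τ - t))) *
          ((M t * (1 + |M t|)⁻¹) * ((1 + |M t₁|) * ‖w‖)) := by ring
      _ = (M t * (1 + |M t|)⁻¹) * ((1 + |M t₁|) * ‖w‖) := by rw [hexp, one_mul]
      _ ≤ 1 * ((1 + |M t₁|) * ‖w‖) :=
          mul_le_mul_of_nonneg_right hMc (by positivity)
      _ = (1 + |M t₁|) * ‖w‖ := one_mul _

/-- The Datko-type estimate along an arbitrary trajectory. -/
lemma lemC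
    (hComp : ∀ t τ s, 0 ≤ s → s ≤ τ → τ ≤ t → ∀ x : X, U t τ (U τ s x) = U t s x)
    (hM : ContinuousOn M (Ici 0))
    (hBound : ∀ t s, 0 ≤ s → s ≤ t → ‖U t s‖ ≤ M s * Real.exp (α * (t - s)))
    {W : ℝ → (ℝ → X) → ℝ} (hWnn : ∀ t u, 0 ≤ W t u)
    {p K : ℝ} (hp : 0 < p) (hK : 0 < K)
    (hW1 : ∀ t₀, 0 ≤ t₀ → ∀ u : ℝ → X,
      (∃ v : ℝ → X, MemC U α v ∧ u = Phim U t₀ v) →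
      W t₀ u ≤ K * phi U α t₀ u ^ p)
    (hW2 : ∀ t₀ t, 0 ≤ t₀ → t₀ ≤ t → ∀ u : ℝ → X,
      (∃ v : ℝ → X, MemC U α v ∧ u = Phim U t₀ v) →
      W t u + (∫ ξ in t₀..t, phi U α ξ u ^ p) = W t₀ u)
    {t₁ : ℝ} (h1 : 0 ≤ t₁) (w : X) :
    IntegrableOn (fun ξ => Psi U α t₁ ξ w ^ p) (Ioi t₁) ∧
    (∫ ξ in Ioi t₁, Psi U α t₁ ξ w ^ p) ≤ K * Psi U α t₁ t₁ w ^ p := by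
  have h := lemA hComp hBound hWnn hp hK hW1 hW2 h1 (cv_mem hM hBound t₁ w)
  rw [cv_at t₁ h1 w] at h
  exact ⟨h.2.1, h.2.2⟩

end Aux3

section Aux4

variable {X : Type*} [NormedAddCommGroup X] [NormedSpace ℝ X]
variable {U : ℝ → ℝ → X →L[ℝ] X} {α : ℝ} {M : ℝ → ℝ}

set_option maxHeartbeats 1600000 in
lemma lemD
    (hComp : ∀ t τ s, 0 ≤ s → s ≤ τ → τ ≤ t → ∀ x : X, U t τ (U τ s x) = U t s x)
    (hM : ContinuousOn M (Ici 0)) (hMpos : ∀ s, 0 ≤ s → 0 < M s)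
    (hBound : ∀ t s, 0 ≤ s → s ≤ t → ‖U t s‖ ≤ M s * Real.exp (α * (t - s)))
    {W : ℝ → (ℝ → X) → ℝ} (hWnn : ∀ t u, 0 ≤ W t u)
    {p K : ℝ} (hp : 0 < p) (hK : 0 < K)
    (hW1 : ∀ t₀, 0 ≤ t₀ → ∀ u : ℝ → X,
      (∃ v : ℝ → X, MemC U α v ∧ u = Phim U t₀ v) →
      W t₀ u ≤ K * phi U α t₀ u ^ p)
    (hW2 : ∀ t₀ t, 0 ≤ t₀ → t₀ ≤ t → ∀ u : ℝ → X,
      (∃ v : ℝ → X, MemC U α v ∧ u = Phim U t₀ v) →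
      W t u + (∫ ξ in t₀..t, phi U α ξ u ^ p) = W t₀ u)
    {s t : ℝ} (hs : 0 ≤ s) (hst : s ≤ t) (w : X) :
    ‖U t s w‖ ≤
      ((Real.exp |α| * (K * Real.exp ((1 + 1/K) * Real.log 2)) ^ (1/p)
          + Real.exp ((|α| + Real.log 2 / (p*K)) * (1+K))) * M s *
        Real.exp (-(Real.log 2 / (p*K)) * (t - s))) * ‖w‖ := by
  set ν : ℝ := Real.log 2 / (p*K) with hν
  have hlog2 : 0 < Real.log 2 := Real.log_pos (by norm_num)
  have hνpos : 0 < ν := div_pos hlog2 (by positivity)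
  set c1 : ℝ := Real.exp |α| * (K * Real.exp ((1 + 1/K) * Real.log 2)) ^ (1/p) with hc1
  set c2 : ℝ := Real.exp ((|α| + ν) * (1+K)) with hc2
  have hc1pos : 0 < c1 := by rw [hc1]; positivity
  have hc2pos : 0 < c2 := Real.exp_pos _
  have hMs : 0 < M s := hMpos s hs
  rcases le_or_gt t (s + (1 + K)) with hcase | hcase
  · -- short time : direct estimate
    have hb := le_trans ((U t s).le_opNorm w)
      (mul_le_mul_of_nonneg_right (hBound t s hs hst) (norm_nonneg w))
    have hexp : Real.exp (α * (t - s)) ≤ c2 * Real.exp (-ν * (t - s)) := by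
      rw [hc2, ← Real.exp_add]
      apply Real.exp_le_exp.2
      nlinarith [le_abs_self α, abs_nonneg α, hνpos.le, sub_nonneg.2 hst,
        mul_nonneg (add_nonneg (abs_nonneg α) hνpos.le)
          (by linarith : (0:ℝ) ≤ 1 + K - (t - s)),
        mul_nonneg (sub_nonneg.2 (le_abs_self α)) (sub_nonneg.2 hst)]
    calc ‖U t s w‖ ≤ M s * Real.exp (α * (t - s)) * ‖w‖ := hb
      _ ≤ M s * (c2 * Real.exp (-ν * (t - s))) * ‖w‖ := by
          exact mul_le_mul_of_nonneg_right
            (mul_le_mul_of_nonneg_left hexp hMs.le) (norm_nonneg w)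
      _ ≤ ((c1 + c2) * M s * Real.exp (-ν * (t - s))) * ‖w‖ := by
          apply mul_le_mul_of_nonneg_right _ (norm_nonneg w)
          nlinarith [mul_pos (mul_pos hc1pos hMs) (Real.exp_pos (-ν * (t - s)))]
  · -- long time
    set g : ℝ → ℝ := fun r => ∫ ξ in Ioi r, Psi U α s ξ w ^ p with hg
    have hbase := lemC hComp hM hBound hWnn hp hK hW1 hW2 hs w
    have hgint : ∀ r, s ≤ r → IntegrableOn (fun ξ => Psi U α s ξ w ^ p) (Ioi r) :=
      fun r hr => hbase.1.mono_set (Ioi_subset_Ioi hr)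
    have hgle : ∀ r, s ≤ r → g r ≤ K * Psi U α s r w ^ p := by
      intro r hr
      have h := (lemC hComp hM hBound hWnn hp hK hW1 hW2 (hs.trans hr) (U r s w)).2
      have heq : (∫ ξ in Ioi r, Psi U α r ξ (U r s w) ^ p) = g r := by
        apply setIntegral_congr_fun measurableSet_Ioi
        intro ξ hξ
        show Psi U α r ξ (U r s w) ^ p = Psi U α s ξ w ^ p
        rw [psi_shift hComp w hs hr (le_of_lt hξ)]
      rw [heq, psi_shift hComp w hs hr le_rfl] at h
      exact h
    have hgnn : ∀ r, 0 ≤ g r :=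
      fun r => setIntegral_nonneg measurableSet_Ioi
        (fun ξ _ => Real.rpow_nonneg (psi_nonneg _ _ _) p)
    have hganti : ∀ r₁ r₂, s ≤ r₁ → r₁ ≤ r₂ → g r₂ ≤ g r₁ := by
      intro r₁ r₂ h1 h2
      apply setIntegral_mono_set (hgint r₁ h1)
        (ae_of_all _ fun ξ => Real.rpow_nonneg (psi_nonneg _ _ _) p)
      exact HasSubset.Subset.eventuallyLE (Ioi_subset_Ioi h2)
    have hstep : ∀ r, s ≤ r → 2 * g (r + K) ≤ g r := by
      intro r hr
      have hrK : s ≤ r + K := by linarith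
      have hIoc : IntegrableOn (fun ξ => Psi U α s ξ w ^ p) (Ioc r (r + K)) :=
        (hgint r hr).mono_set Ioc_subset_Ioi_self
      have hsplit : g r = (∫ ξ in Ioc r (r + K), Psi U α s ξ w ^ p) + g (r + K) := by
        rw [hg]
        simp only
        rw [← Ioc_union_Ioi_eq_Ioi (by linarith : r ≤ r + K)]
        exact setIntegral_union (Ioc_disjoint_Ioi le_rfl) measurableSet_Ioi hIoc
          (hgint (r + K) hrK)
      have hlow : ∀ ξ ∈ Ioc r (r + K), g (r + K) / K ≤ Psi U α s ξ w ^ p := by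
        intro ξ hξ
        have h1 : g (r + K) ≤ g ξ := hganti ξ (r + K) (hr.trans hξ.1.le) hξ.2
        have h2 : g ξ ≤ K * Psi U α s ξ w ^ p := hgle ξ (hr.trans hξ.1.le)
        rw [div_le_iff₀ hK]
        nlinarith
      have hmono := setIntegral_mono_on
        (integrableOn_const measure_Ioc_lt_top.ne) hIoc measurableSet_Ioc hlow
      have hconst : (∫ _ξ in Ioc r (r + K), g (r + K) / K) = g (r + K) := by
        rw [setIntegral_const, Real.volume_real_Ioc_of_le (by linarith : r ≤ r + K),
          show r + K - r = K by ring, smul_eq_mul,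
          mul_div_cancel₀ _ hK.ne']
      rw [hconst] at hmono
      linarith
    have hiter : ∀ n : ℕ, g (s + n * K) ≤ g s / 2 ^ n := by
      intro n
      induction n with
      | zero => simp
      | succ n ih =>
        have h1 := hstep (s + n * K) (le_add_of_nonneg_right (by positivity))
        have h2 : s + ((n+1 : ℕ) : ℝ) * K = (s + n * K) + K := by push_cast; ring
        have h3 : g s / 2 ^ (n+1) = (g s / 2 ^ n) / 2 := by
          rw [pow_succ, ← div_div]
        rw [h2, h3]
        linarith
    -- choose n
    set n : ℕ := ⌊(t - s - 1) / K⌋₊ with hn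
    have hq : 0 ≤ (t - s - 1) / K := div_nonneg (by linarith) hK.le
    have hn1 : (n : ℝ) * K ≤ t - s - 1 := by
      have := Nat.floor_le hq
      rw [← hn] at this
      calc (n : ℝ) * K ≤ ((t - s - 1) / K) * K := by
            exact mul_le_mul_of_nonneg_right this hK.le
        _ = t - s - 1 := by field_simp
    have hn2 : t - s - 1 < ((n : ℝ) + 1) * K := by
      have := Nat.lt_floor_add_one ((t - s - 1) / K)
      rw [← hn] at this
      calc t - s - 1 = ((t - s - 1) / K) * K := by field_simp
        _ < ((n : ℝ) + 1) * K := mul_lt_mul_of_pos_right this hK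
    have hsn : s + n * K ≤ t - 1 := by linarith
    have hst1 : s ≤ t - 1 := by linarith
    set A : ℝ := ‖U t s w‖ with hA
    have hAnn : 0 ≤ A := norm_nonneg _
    -- key1 : (exp(-|α|) * A)^p ≤ g (t-1)
    have key1 : (Real.exp (-|α|) * A) ^ p ≤ g (t - 1) := by
      have hIoc : IntegrableOn (fun ξ => Psi U α s ξ w ^ p) (Ioc (t-1) t) :=
        (hgint (t-1) hst1).mono_set Ioc_subset_Ioi_self
      have hlow : ∀ ξ ∈ Ioc (t-1) t, (Real.exp (-|α|) * A) ^ p ≤ Psi U α s ξ w ^ p := by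
        intro ξ hξ
        apply Real.rpow_le_rpow (by positivity) _ hp.le
        have h1 : Real.exp (-|α|) * A ≤ Real.exp (-α * (t - ξ)) * A := by
          apply mul_le_mul_of_nonneg_right _ hAnn
          apply Real.exp_le_exp.2
          nlinarith [le_abs_self α, abs_nonneg α, neg_abs_le α, hξ.1, hξ.2,
            mul_nonneg (sub_nonneg.2 (neg_abs_le α)) (sub_nonneg.2 hξ.2),
            mul_nonneg (abs_nonneg α) (by linarith [hξ.1] : (0:ℝ) ≤ 1 - (t - ξ))]
        exact h1.trans (le_psi hBound w hs (hst1.trans hξ.1.le) hξ.2)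
      have hmono := setIntegral_mono_on
        (integrableOn_const measure_Ioc_lt_top.ne) hIoc measurableSet_Ioc hlow
      have hconst : (∫ _ξ in Ioc (t-1) t, (Real.exp (-|α|) * A) ^ p)
          = (Real.exp (-|α|) * A) ^ p := by
        rw [setIntegral_const, Real.volume_real_Ioc_of_le (by linarith : t - 1 ≤ t),
          show t - (t - 1) = 1 by ring, one_smul]
      rw [hconst] at hmono
      refine hmono.trans ?_
      exact setIntegral_mono_set (hgint (t-1) hst1)
        (ae_of_all _ fun ξ => Real.rpow_nonneg (psi_nonneg _ _ _) p)
        (HasSubset.Subset.eventuallyLE Ioc_subset_Ioi_self)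
    -- key2 : g (t-1) ≤ K * (M s * ‖w‖)^p / 2^n
    have key2 : g (t - 1) ≤ K * (M s * ‖w‖) ^ p / 2 ^ n := by
      have h1 : g (t - 1) ≤ g (s + n * K) :=
        hganti (s + n * K) (t - 1) (le_add_of_nonneg_right (by positivity)) hsn
      have h2 := hiter n
      have h3 : g s ≤ K * Psi U α s s w ^ p := hgle s le_rfl
      have h4 : Psi U α s s w ^ p ≤ (M s * ‖w‖) ^ p :=
        Real.rpow_le_rpow (psi_nonneg _ _ _) (psi_self_le hBound w hs) hp.le
      have h5 : g s ≤ K * (M s * ‖w‖) ^ p := by nlinarith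
      have h6 : g s / 2 ^ n ≤ K * (M s * ‖w‖) ^ p / 2 ^ n := by
        gcongr
      linarith
    -- convert 2^n and combine
    have h2n : (2:ℝ) ^ n = Real.exp ((n : ℝ) * Real.log 2) := by
      rw [Real.exp_nat_mul, Real.exp_log (by norm_num : (0:ℝ) < 2)]
    have hexpb : Real.exp (-((n:ℝ) * Real.log 2))
        ≤ Real.exp ((1 + 1/K) * Real.log 2 - (Real.log 2 / K) * (t - s)) := by
      apply Real.exp_le_exp.2
      have e1 : t - s < ((n:ℝ) + 1) * K + 1 := by linarith
      apply le_of_mul_le_mul_left _ hK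
      have hKY : K * ((1 + 1/K) * Real.log 2 - (Real.log 2 / K) * (t - s))
          = (K + 1) * Real.log 2 - Real.log 2 * (t - s) := by
        first
        | (field_simp; ring)
        | field_simp
      rw [hKY]
      linarith [mul_le_mul_of_nonneg_left e1.le hlog2.le]
    have key3 : (Real.exp (-|α|) * A) ^ p
        ≤ (K * Real.exp ((1 + 1/K) * Real.log 2)) * (M s * ‖w‖) ^ p *
          Real.exp (-(Real.log 2 / K) * (t - s)) := by
      have h7 : K * (M s * ‖w‖) ^ p / 2 ^ n
          = K * (M s * ‖w‖) ^ p * Real.exp (-((n:ℝ) * Real.log 2)) := by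
        rw [h2n, Real.exp_neg, div_eq_mul_inv]
      have h8 := key1.trans (key2.trans_eq h7)
      calc (Real.exp (-|α|) * A) ^ p
          ≤ K * (M s * ‖w‖) ^ p * Real.exp (-((n:ℝ) * Real.log 2)) := h8
        _ ≤ K * (M s * ‖w‖) ^ p *
            Real.exp ((1 + 1/K) * Real.log 2 - (Real.log 2 / K) * (t - s)) := by
            apply mul_le_mul_of_nonneg_left hexpb
            positivity
        _ = (K * Real.exp ((1 + 1/K) * Real.log 2)) * (M s * ‖w‖) ^ p *
            Real.exp (-(Real.log 2 / K) * (t - s)) := by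
            rw [Real.exp_sub,
              show -(Real.log 2 / K) * (t - s) = -(Real.log 2 / K * (t - s)) from by ring,
              Real.exp_neg, div_eq_mul_inv]
            ring
    -- take p-th roots
    have hroot : Real.exp (-|α|) * A
        ≤ (K * Real.exp ((1 + 1/K) * Real.log 2)) ^ (1/p) * (M s * ‖w‖) *
          Real.exp (-ν * (t - s)) := by
      have h9 := Real.rpow_le_rpow (by positivity) key3 (by positivity : (0:ℝ) ≤ 1/p)
      have hL : ((Real.exp (-|α|) * A) ^ p) ^ (1/p) = Real.exp (-|α|) * A := by
        rw [← Real.rpow_mul (by positivity : (0:ℝ) ≤ Real.exp (-|α|) * A),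
          mul_one_div_cancel hp.ne', Real.rpow_one]
      have hR : ((K * Real.exp ((1 + 1/K) * Real.log 2)) * (M s * ‖w‖) ^ p *
            Real.exp (-(Real.log 2 / K) * (t - s))) ^ (1/p)
          = (K * Real.exp ((1 + 1/K) * Real.log 2)) ^ (1/p) * (M s * ‖w‖) *
            Real.exp (-ν * (t - s)) := by
        have harg : (-(Real.log 2 / K) * (t - s)) * (1/p) = -ν * (t - s) := by
          rw [hν]; simp only [div_eq_mul_inv, mul_inv]; ring
        rw [Real.mul_rpow (by positivity) (Real.exp_nonneg _),
          Real.mul_rpow (by positivity) (by positivity),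
          ← Real.rpow_mul (by positivity : (0:ℝ) ≤ M s * ‖w‖),
          mul_one_div_cancel hp.ne', Real.rpow_one, ← Real.exp_mul, harg]
      rw [hL, hR] at h9
      exact h9
    -- multiply by exp |α|
    have hA2 : A ≤ c1 * (M s * ‖w‖) * Real.exp (-ν * (t - s)) := by
      have h10 : Real.exp |α| * (Real.exp (-|α|) * A) = A := by
        rw [← mul_assoc, ← Real.exp_add]
        simp
      calc A = Real.exp |α| * (Real.exp (-|α|) * A) := h10.symm
        _ ≤ Real.exp |α| * ((K * Real.exp ((1 + 1/K) * Real.log 2)) ^ (1/p) *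
            (M s * ‖w‖) * Real.exp (-ν * (t - s))) :=
            mul_le_mul_of_nonneg_left hroot (Real.exp_nonneg _)
        _ = c1 * (M s * ‖w‖) * Real.exp (-ν * (t - s)) := by rw [hc1]; ring
    have heq : (c1 + c2) * M s * Real.exp (-ν * (t - s)) * ‖w‖
        = c1 * (M s * ‖w‖) * Real.exp (-ν * (t - s))
          + c2 * M s * Real.exp (-ν * (t - s)) * ‖w‖ := by ring
    have hpos2 : 0 ≤ c2 * M s * Real.exp (-ν * (t - s)) * ‖w‖ := by positivity
    calc A ≤ c1 * (M s * ‖w‖) * Real.exp (-ν * (t - s)) := hA2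
      _ ≤ (c1 + c2) * M s * Real.exp (-ν * (t - s)) * ‖w‖ := by rw [heq]; linarith

end Aux4

theorem stmt18 {X : Type*} [NormedAddCommGroup X] [NormedSpace ℝ X] [CompleteSpace X]
    (U : ℝ → ℝ → X →L[ℝ] X)
    (hId : ∀ t, 0 ≤ t → ∀ x : X, U t t x = x)
    (hComp : ∀ t τ s, 0 ≤ s → s ≤ τ → τ ≤ t → ∀ x : X, U t τ (U τ s x) = U t s x)
    (hCont : ∀ x : X, ContinuousOn (fun p : ℝ × ℝ => U p.1 p.2 x) {p | 0 ≤ p.2 ∧ p.2 ≤ p.1})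
    (α : ℝ) (M : ℝ → ℝ) (hM : ContinuousOn M (Ici 0)) (hMpos : ∀ s, 0 ≤ s → 0 < M s)
    (hBound : ∀ t s, 0 ≤ s → s ≤ t → ‖U t s‖ ≤ M s * Real.exp (α * (t - s)))
    (W : ℝ → (ℝ → X) → ℝ) (hWnn : ∀ t u, 0 ≤ W t u)
    (p K : ℝ) (hp : 0 < p) (hK : 0 < K)
    (hW1 : ∀ t₀, 0 ≤ t₀ → ∀ u : ℝ → X,
      (∃ v : ℝ → X, MemC U α v ∧ u = Phim U t₀ v) →
      W t₀ u ≤ K * phi U α t₀ u ^ p)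
    (hW2 : ∀ t₀ t, 0 ≤ t₀ → t₀ ≤ t → ∀ u : ℝ → X,
      (∃ v : ℝ → X, MemC U α v ∧ u = Phim U t₀ v) →
      W t u + (∫ ξ in t₀..t, phi U α ξ u ^ p) = W t₀ u) :
    (∀ t₀, 0 ≤ t₀ → ∀ u : ℝ → X,
        (∃ v : ℝ → X, MemC U α v ∧ u = Phim U t₀ v) →
        (∫ ξ in Ioi t₀, phi U α ξ u ^ p) ≤ K * phi U α t₀ u ^ p) ∧
    (∃ ν : ℝ, 0 < ν ∧ ∃ Mt : ℝ → ℝ, ContinuousOn Mt (Ici 0) ∧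
        (∀ s, 0 ≤ s → 0 < Mt s) ∧
        ∀ t s, 0 ≤ s → s ≤ t → ‖U t s‖ ≤ Mt s * Real.exp (-ν * (t - s))) := by
  constructor
  · rintro t₀ h0 u ⟨v, hv, rfl⟩
    have h := lemA hComp hBound hWnn hp hK hW1 hW2 h0 hv
    have heq : (∫ ξ in Ioi t₀, phi U α ξ (Phim U t₀ v) ^ p)
        = ∫ ξ in Ioi t₀, Psi U α t₀ ξ (v t₀) ^ p := by
      apply setIntegral_congr_fun measurableSet_Ioi
      intro ξ hξ
      show phi U α ξ (Phim U t₀ v) ^ p = Psi U α t₀ ξ (v t₀) ^ p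
      rw [h.1 ξ (le_of_lt hξ)]
    rw [heq, h.1 t₀ le_rfl]
    exact h.2.2
  · refine ⟨Real.log 2 / (p*K), div_pos (Real.log_pos (by norm_num)) (by positivity),
      fun s => (Real.exp |α| * (K * Real.exp ((1 + 1/K) * Real.log 2)) ^ (1/p)
          + Real.exp ((|α| + Real.log 2 / (p*K)) * (1+K))) * M s, ?_, ?_, ?_⟩
    · exact continuousOn_const.mul hM
    · intro s hs
      have := hMpos s hs
      positivity
    · intro t s hs hst
      apply ContinuousLinearMap.opNorm_le_bound
      · have := hMpos s hs
        positivity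
      · intro w
        exact lemD hComp hM hMpos hBound hWnn hp hK hW1 hW2 hs hst w
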